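/- Let τ ∈ (0,1] and δ = −(τ + 1/τ), and let α be the maximal solution of the ODE α'' = δα + 2α³ with α(0) = 0 and α'(0) = 1. Then α is defined on all of ℝ and satisfies α'(x)² = α(x)⁴ + δ·α(x)² + 1 = (α(x)² − τ)·(α(x)² − 1/τ) and −√τ ≤ α(x) ≤ √τ for all x ∈ ℝ. If τ = 1, then α(x) = tanh(x) for all x ∈ ℝ. If τ ∈ (0,1), then α is periodic and attains both of the values √τ and −√τ. -/

import Mathlib

open Set Real Filter MeasureTheory intervalIntegral

lemma pcc_aux (τ : ℝ) (hτ0 : 0 < τ) (hτ1 : τ < 1) :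
    ∃ α α' : ℝ → ℝ,
      (∀ x, HasDerivAt α (α' x) x) ∧
      (∀ x, HasDerivAt α' (-(τ + 1/τ) * α x + 2 * (α x) ^ 3) x) ∧
      α 0 = 0 ∧ α' 0 = 1 ∧
      (∀ x, (α' x) ^ 2 = (α x) ^ 4 + -(τ + 1/τ) * (α x) ^ 2 + 1) ∧
      (∀ x, -Real.sqrt τ ≤ α x ∧ α x ≤ Real.sqrt τ) ∧
      ((∃ T : ℝ, 0 < T ∧ Function.Periodic α T) ∧
        (∃ x, α x = Real.sqrt τ) ∧ (∃ x, α x = -Real.sqrt τ)) := by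
  have hτ0' : (0:ℝ) < 1/τ := by positivity
  have h1τ : 1 < 1/τ := by rw [lt_div_iff₀ hτ0]; linarith
  -- the function h and g
  set h : ℝ → ℝ := fun y => 1/τ - τ * Real.sin y ^ 2 with hh
  have hpos : ∀ y, 0 < h y := by
    intro y
    have := Real.sin_sq_le_one y
    have : τ * Real.sin y ^ 2 ≤ τ * 1 := by nlinarith
    simp only [hh]; nlinarith
  set g : ℝ → ℝ := fun y => Real.sqrt (h y) with hg
  have gpos : ∀ y, 0 < g y := fun y => Real.sqrt_pos.mpr (hpos y)
  have gsq : ∀ y, g y ^ 2 = h y := fun y => Real.sq_sqrt (hpos y).le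
  have hcont : Continuous h := by
    simp only [hh]; fun_prop
  have gcont : Continuous g := hcont.sqrt
  set f : ℝ → ℝ := fun y => (g y)⁻¹ with hf
  have fcont : Continuous f := gcont.inv₀ fun y => (gpos y).ne'
  have fint : ∀ a b : ℝ, IntervalIntegrable f volume a b :=
    fun a b => fcont.intervalIntegrable a b
  set G : ℝ → ℝ := fun y => ∫ t in (0:ℝ)..y, f t with hG
  have GD : ∀ y, HasDerivAt G (f y) y := fun y =>
    intervalIntegral.integral_hasDerivAt_right (fint 0 y)
      (fcont.stronglyMeasurableAtFilter _ _) fcont.continuousAt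
  have Gmono : StrictMono G := by
    apply strictMono_of_deriv_pos
    intro y
    rw [(GD y).deriv]
    exact inv_pos.mpr (gpos y)
  have sτpos : 0 < Real.sqrt τ := Real.sqrt_pos.mpr hτ0
  have fge : ∀ y, Real.sqrt τ ≤ f y := by
    intro y
    have hle : h y ≤ 1/τ := by
      simp only [hh]; nlinarith [sq_nonneg (Real.sin y), hτ0.le]
    have : g y ≤ Real.sqrt (1/τ) := Real.sqrt_le_sqrt hle
    have h2 : Real.sqrt (1/τ) = (Real.sqrt τ)⁻¹ := by
      rw [one_div, Real.sqrt_inv]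
    have h3 := inv_anti₀ (gpos y) (h2 ▸ this)
    rw [inv_inv] at h3
    simpa [hf] using h3
  have Glb : ∀ y, 0 ≤ y → Real.sqrt τ * y ≤ G y := by
    intro y hy
    have := intervalIntegral.integral_mono_on hy
      (intervalIntegrable_const) (fint 0 y) (fun x _ => fge x)
    simpa [hG, mul_comm] using this
  have Gub : ∀ y, y ≤ 0 → G y ≤ Real.sqrt τ * y := by
    intro y hy
    have hmono := intervalIntegral.integral_mono_on hy
      (intervalIntegrable_const) (fint y 0) (fun x _ => fge x)
    have h1 : G y = -∫ t in y..(0:ℝ), f t := intervalIntegral.integral_symm y 0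
    have h2 : (∫ _t in y..(0:ℝ), Real.sqrt τ) = (0 - y) * Real.sqrt τ := by
      rw [intervalIntegral.integral_const]; ring_nf
    rw [h1]
    rw [h2] at hmono
    linarith
  have Gtop : Tendsto G atTop atTop := by
    apply tendsto_atTop_mono' atTop (eventually_atTop.mpr ⟨0, fun y hy => Glb y hy⟩)
    exact Tendsto.const_mul_atTop sτpos tendsto_id
  have Gbot : Tendsto G atBot atBot := by
    apply tendsto_atBot_mono' atBot (eventually_atBot.mpr ⟨0, fun y hy => Gub y hy⟩)
    exact Tendsto.const_mul_atBot sτpos tendsto_id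
  have GCont : Continuous G := by
    rw [continuous_iff_continuousAt]; exact fun y => (GD y).continuousAt
  have Gsurj : Function.Surjective G := GCont.surjective Gtop Gbot
  set E := StrictMono.orderIsoOfSurjective G Gmono Gsurj with hE
  set θ : ℝ → ℝ := ⇑E.symm with hθ
  have hGθ : ∀ x, G (θ x) = x := by
    intro x
    have := E.apply_symm_apply x
    rwa [hE, StrictMono.coe_orderIsoOfSurjective] at this
  have hθG : ∀ y, θ (G y) = y := by
    intro y
    have : E y = G y := by rw [hE]; rw [StrictMono.coe_orderIsoOfSurjective]
    rw [hθ, ← this, E.symm_apply_apply]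
  have θcont : Continuous θ := E.symm.continuous
  have θD : ∀ x, HasDerivAt θ (g (θ x)) x := by
    intro x
    have := HasDerivAt.of_local_left_inverse θcont.continuousAt (GD (θ x))
      (inv_ne_zero (gpos (θ x)).ne') (Eventually.of_forall hGθ)
    simpa [hf, inv_inv] using this
  have θ0 : θ 0 = 0 := by
    have hG0 : G 0 = 0 := intervalIntegral.integral_same
    have := hθG 0
    rwa [hG0] at this
  -- the solution
  set A : ℝ → ℝ := fun x => Real.sqrt τ * Real.sin (θ x) with hA
  set A' : ℝ → ℝ := fun x => Real.sqrt τ * (Real.cos (θ x) * g (θ x)) with hA'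
  have hAD : ∀ x, HasDerivAt A (A' x) x := by
    intro x
    have h1 : HasDerivAt (fun x => Real.sin (θ x)) (Real.cos (θ x) * g (θ x)) x :=
      (Real.hasDerivAt_sin (θ x)).comp x (θD x)
    exact h1.const_mul _
  have hsτ : Real.sqrt τ ^ 2 = τ := Real.sq_sqrt hτ0.le
  -- derivative of g
  have gD : ∀ y, HasDerivAt g (-(τ * ((2:ℕ) * Real.sin y ^ 1 * Real.cos y)) / (2 * g y)) y := by
    intro y
    have h1 : HasDerivAt (fun y => Real.sin y ^ 2) ((2:ℕ) * Real.sin y ^ 1 * Real.cos y) y :=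
      (Real.hasDerivAt_sin y).pow 2
    have h2 : HasDerivAt h (0 - τ * ((2:ℕ) * Real.sin y ^ 1 * Real.cos y)) y :=
      (hasDerivAt_const y (1/τ)).sub (h1.const_mul τ)
    have h3 := h2.sqrt (hpos y).ne'
    simpa [hg] using h3
  have hA'D : ∀ x, HasDerivAt A' (-(τ + 1/τ) * A x + 2 * (A x) ^ 3) x := by
    intro x
    have h1 : HasDerivAt (fun x => Real.cos (θ x)) (-Real.sin (θ x) * g (θ x)) x :=
      (Real.hasDerivAt_cos (θ x)).comp x (θD x)
    have h2 : HasDerivAt (fun x => g (θ x))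
        (-(τ * ((2:ℕ) * Real.sin (θ x) ^ 1 * Real.cos (θ x))) / (2 * g (θ x)) * g (θ x)) x :=
      (gD (θ x)).comp x (θD x)
    have h3 := ((h1.mul h2).const_mul (Real.sqrt τ))
    refine h3.congr_deriv (Eq.symm ?_)
    have hgne : g (θ x) ≠ 0 := (gpos (θ x)).ne'
    have hg2 : g (θ x) ^ 2 = 1/τ - τ * Real.sin (θ x) ^ 2 := gsq (θ x)
    have hc2 : Real.cos (θ x) ^ 2 = 1 - Real.sin (θ x) ^ 2 := Real.cos_sq' (θ x)
    have hτne : τ ≠ 0 := hτ0.ne'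
    simp only [hA, hA']
    have hdiv : -(τ * ((2:ℕ) * Real.sin (θ x) ^ 1 * Real.cos (θ x))) / (2 * g (θ x)) * g (θ x)
        = -(τ * (Real.sin (θ x) * Real.cos (θ x))) := by
      field_simp
      ring
    rw [hdiv]
    have hre : Real.sqrt τ * (-Real.sin (θ x) * g (θ x) * g (θ x)
          + Real.cos (θ x) * -(τ * (Real.sin (θ x) * Real.cos (θ x))))
        = Real.sqrt τ * (-Real.sin (θ x)) * (g (θ x) ^ 2)
          + (-τ) * Real.sqrt τ * Real.sin (θ x) * (Real.cos (θ x) ^ 2) := by ring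
    rw [hre, hg2, hc2]
    have hl : -(τ + 1/τ) * (Real.sqrt τ * Real.sin (θ x))
          + 2 * (Real.sqrt τ * Real.sin (θ x)) ^ 3
        = -(τ + 1/τ) * (Real.sqrt τ * Real.sin (θ x))
          + 2 * (Real.sqrt τ ^ 2) * Real.sqrt τ * Real.sin (θ x) ^ 3 := by ring
    rw [hl, hsτ]
    field_simp
    ring
  have hA0 : A 0 = 0 := by simp [hA, θ0]
  have hA'0 : A' 0 = 1 := by
    simp only [hA', θ0, Real.cos_zero, one_mul]
    have : h 0 = 1/τ := by simp [hh]
    rw [hg]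
    simp only [this]
    rw [← Real.sqrt_mul hτ0.le]
    rw [mul_one_div, div_self hτ0.ne', Real.sqrt_one]
  have hFI : ∀ x, (A' x) ^ 2 = (A x) ^ 4 + -(τ + 1/τ) * (A x) ^ 2 + 1 := by
    intro x
    have hg2 : g (θ x) ^ 2 = 1/τ - τ * Real.sin (θ x) ^ 2 := gsq (θ x)
    have hc2 : Real.cos (θ x) ^ 2 = 1 - Real.sin (θ x) ^ 2 := Real.cos_sq' (θ x)
    simp only [hA, hA']
    have hτne : τ ≠ 0 := hτ0.ne'
    have hsτ4 : Real.sqrt τ ^ 4 = τ ^ 2 := by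
      rw [show Real.sqrt τ ^ 4 = (Real.sqrt τ ^ 2) ^ 2 by ring, hsτ]
    have h1 : (Real.sqrt τ * (Real.cos (θ x) * g (θ x))) ^ 2
        = Real.sqrt τ ^ 2 * Real.cos (θ x) ^ 2 * g (θ x) ^ 2 := by ring
    have h2 : (Real.sqrt τ * Real.sin (θ x)) ^ 4
          + -(τ + 1/τ) * (Real.sqrt τ * Real.sin (θ x)) ^ 2 + 1
        = Real.sqrt τ ^ 4 * Real.sin (θ x) ^ 4
          + -(τ + 1/τ) * (Real.sqrt τ ^ 2 * Real.sin (θ x) ^ 2) + 1 := by ring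
    rw [h1, h2, hsτ, hsτ4, hc2, hg2]
    field_simp
    ring
  have hbd : ∀ x, -Real.sqrt τ ≤ A x ∧ A x ≤ Real.sqrt τ := by
    intro x
    have h1 : Real.sqrt τ * (-1) ≤ Real.sqrt τ * Real.sin (θ x) :=
      mul_le_mul_of_nonneg_left (Real.neg_one_le_sin (θ x)) sτpos.le
    have h2 : Real.sqrt τ * Real.sin (θ x) ≤ Real.sqrt τ * 1 :=
      mul_le_mul_of_nonneg_left (Real.sin_le_one (θ x)) sτpos.le
    constructor
    · simp only [hA]; linarith
    · simp only [hA]; linarith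
  -- periodicity
  have hper : ∀ t, f (t + 2*Real.pi) = f t := by
    intro t
    simp [hf, hg, hh, Real.sin_add_two_pi]
  have hGadd : ∀ y, G (y + 2*Real.pi) = G y + G (2*Real.pi) := by
    intro y
    have h1 : G (2*Real.pi) + (∫ t in (2*Real.pi)..(y + 2*Real.pi), f t) = G (y + 2*Real.pi) :=
      intervalIntegral.integral_add_adjacent_intervals (fint _ _) (fint _ _)
    have h2 : (∫ t in (2*Real.pi)..(y + 2*Real.pi), f t) = G y := by
      have h3 := intervalIntegral.integral_comp_add_right (a := 0) (b := y) f (2*Real.pi)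
      simp only [hper] at h3
      rw [zero_add] at h3
      exact h3.symm
    rw [← h1, h2]
    ring
  set T := G (2*Real.pi) with hT
  have Tpos : 0 < T := by
    have := Gmono (show (0:ℝ) < 2*Real.pi by positivity)
    rwa [show G 0 = 0 from intervalIntegral.integral_same] at this
  have θadd : ∀ x, θ (x + T) = θ x + 2*Real.pi := by
    intro x
    have h1 : G (θ x + 2*Real.pi) = x + T := by rw [hGadd, hGθ]
    have h2 := congrArg θ h1
    rw [hθG] at h2; exact h2.symm
  have hAper : Function.Periodic A T := by
    intro x
    simp [hA, θadd, Real.sin_add_two_pi]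
  have θsurj : Function.Surjective θ := E.symm.surjective
  refine ⟨A, A', hAD, hA'D, hA0, hA'0, hFI, hbd, ⟨T, Tpos, hAper⟩, ?_, ?_⟩
  · obtain ⟨x, hx⟩ := θsurj (Real.pi/2)
    exact ⟨x, by simp [hA, hx, Real.sin_pi_div_two]⟩
  · obtain ⟨x, hx⟩ := θsurj (-(Real.pi/2))
    exact ⟨x, by simp [hA, hx, Real.sin_pi_div_two]⟩

/-- Section 8.1: the solution of `α'' = δα + 2α³`, `δ = −(τ + 1/τ)`, `α(0) = 0`,
`α'(0) = 1`, with `τ ∈ (0,1]`, is globally defined and satisfies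
`α'² = α⁴ + δα² + 1 = (α² − τ)(α² − 1/τ)` and `|α| ≤ √τ`; it equals `tanh` for `τ = 1`
and is periodic, attaining `±√τ`, for `τ ∈ (0,1)`. -/
theorem planar_capillary_coefficient_ode
    (τ : ℝ) (hτ0 : 0 < τ) (hτ1 : τ ≤ 1)
    (δ : ℝ) (hδ : δ = -(τ + 1 / τ)) :
    ∃ α α' : ℝ → ℝ,
      (∀ x, HasDerivAt α (α' x) x) ∧
      (∀ x, HasDerivAt α' (δ * α x + 2 * (α x) ^ 3) x) ∧
      α 0 = 0 ∧ α' 0 = 1 ∧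
      (∀ x, (α' x) ^ 2 = (α x) ^ 4 + δ * (α x) ^ 2 + 1) ∧
      (∀ x, (α x) ^ 4 + δ * (α x) ^ 2 + 1 = ((α x) ^ 2 - τ) * ((α x) ^ 2 - 1 / τ)) ∧
      (∀ x, -Real.sqrt τ ≤ α x ∧ α x ≤ Real.sqrt τ) ∧
      (τ = 1 → ∀ x, α x = Real.tanh x) ∧
      (τ < 1 →
        (∃ T : ℝ, 0 < T ∧ Function.Periodic α T) ∧
        (∃ x, α x = Real.sqrt τ) ∧ (∃ x, α x = -Real.sqrt τ)) := by
  have hfact : ∀ a : ℝ, a ^ 4 + δ * a ^ 2 + 1 = (a ^ 2 - τ) * (a ^ 2 - 1/τ) := by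
    intro a
    rw [hδ]
    field_simp
    ring
  rcases eq_or_lt_of_le hτ1 with heq | hlt
  · -- τ = 1 : tanh
    subst heq
    have hδ' : δ = -2 := by rw [hδ]; norm_num
    have htanh : ∀ x, HasDerivAt Real.tanh (1 - Real.tanh x ^ 2) x := by
      intro x
      have hc : Real.cosh x ≠ 0 := (Real.cosh_pos (x := x)).ne'
      have hd := (Real.hasDerivAt_sinh x).div (Real.hasDerivAt_cosh x) hc
      have hfun : (Real.sinh / Real.cosh) = Real.tanh := by
        funext y; rw [Real.tanh_eq_sinh_div_cosh]; rfl
      rw [hfun] at hd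
      refine hd.congr_deriv (Eq.symm ?_)
      have h1 := Real.cosh_sq_sub_sinh_sq x
      rw [Real.tanh_eq_sinh_div_cosh]
      field_simp
    have hT2 : ∀ x, HasDerivAt (fun x => 1 - Real.tanh x ^ 2)
        (δ * Real.tanh x + 2 * Real.tanh x ^ 3) x := by
      intro x
      have h2 := ((htanh x).pow 2).const_sub 1
      refine h2.congr_deriv ?_
      rw [hδ']
      push_cast
      ring
    have htlt : ∀ x, Real.tanh x < 1 := by
      intro x
      rw [Real.tanh_eq_sinh_div_cosh, div_lt_one (Real.cosh_pos (x := x))]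
      nlinarith [Real.cosh_sub_sinh x, Real.exp_pos (-x)]
    have htgt : ∀ x, -1 < Real.tanh x := by
      intro x
      rw [Real.tanh_eq_sinh_div_cosh, lt_div_iff₀ (Real.cosh_pos (x := x))]
      nlinarith [Real.cosh_add_sinh x, Real.exp_pos x]
    refine ⟨Real.tanh, fun x => 1 - Real.tanh x ^ 2, htanh, hT2, Real.tanh_zero,
      by simp [Real.tanh_zero], ?_, fun x => hfact _, ?_, fun _ x => rfl,
      fun hc => absurd hc (lt_irrefl 1)⟩
    · intro x
      rw [hδ']
      ring
    · intro x
      rw [Real.sqrt_one]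
      exact ⟨(htgt x).le, (htlt x).le⟩
  · -- τ < 1 : elliptic case
    obtain ⟨A, A', h1, h2, h3, h4, h5, h6, h7⟩ := pcc_aux τ hτ0 hlt
    rw [← hδ] at h2 h5
    exact ⟨A, A', h1, h2, h3, h4, h5, fun x => hfact _, h6,
      fun hc => absurd hc (by linarith), fun _ => h7⟩
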